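/- arXiv:2007.14339 — 5 statements merged into one kernel-verified Lean document; each statement's English description precedes it below -/
import Mathlib

section
/- If at least one part of the complete bipartite graph K_{m,n} has odd cardinality (m odd or n odd), then K_{m,n} admits no satisfactory partition. -/
open Classical Finset

/-- `dIn G S v` is the number of neighbours of `v` lying in `S`. -/
noncomputable def dIn {V : Type*} [Fintype V] (G : SimpleGraph V) (S : Finset V) (v : V) : ℕ :=
  (Finset.univ.filter (fun u => G.Adj v u ∧ u ∈ S)).card

/-- `(V1, V1ᶜ)` is a satisfactory partition: both parts nonempty and every vertex has at
least as many neighbours in its own part as in the other part. -/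
def IsSatPartition {V : Type*} [Fintype V] [DecidableEq V]
    (G : SimpleGraph V) (V1 : Finset V) : Prop :=
  V1.Nonempty ∧ V1ᶜ.Nonempty ∧
    (∀ v ∈ V1, dIn G V1ᶜ v ≤ dIn G V1 v) ∧
    (∀ v ∈ V1ᶜ, dIn G V1 v ≤ dIn G V1ᶜ v)
lemma dIn_inl {m n : ℕ} (S : Finset (Fin m ⊕ Fin n)) (x : Fin m) :
    dIn (completeBipartiteGraph (Fin m) (Fin n)) S (Sum.inl x)
      = (S.filter (fun u => u.isRight = true)).card := by
  unfold dIn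
  congr 1
  ext u
  cases u <;> simp [and_comm]

lemma dIn_inr {m n : ℕ} (S : Finset (Fin m ⊕ Fin n)) (y : Fin n) :
    dIn (completeBipartiteGraph (Fin m) (Fin n)) S (Sum.inr y)
      = (S.filter (fun u => u.isLeft = true)).card := by
  unfold dIn
  congr 1
  ext u
  cases u <;> simp [and_comm]

lemma filter_compl_add {α : Type*} [Fintype α] [DecidableEq α] (S : Finset α)
    (p : α → Prop) [DecidablePred p] :
    (S.filter p).card + (Sᶜ.filter p).card = ((univ : Finset α).filter p).card := by
  rw [← Finset.card_union_of_disjoint (Finset.disjoint_filter_filter disjoint_compl_right),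
    ← Finset.filter_union, Finset.union_compl]

lemma filter_right_univ {m n : ℕ} :
    ((univ : Finset (Fin m ⊕ Fin n)).filter (fun u => u.isRight = true)).card = n := by
  have : (univ : Finset (Fin m ⊕ Fin n)).filter (fun u => u.isRight = true)
      = univ.map ⟨Sum.inr, Sum.inr_injective⟩ := by
    ext u; cases u <;> simp
  rw [this]; simp

lemma filter_left_univ {m n : ℕ} :
    ((univ : Finset (Fin m ⊕ Fin n)).filter (fun u => u.isLeft = true)).card = m := by
  have : (univ : Finset (Fin m ⊕ Fin n)).filter (fun u => u.isLeft = true)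
      = univ.map ⟨Sum.inl, Sum.inl_injective⟩ := by
    ext u; cases u <;> simp
  rw [this]; simp

/-- If at least one part of K_{m,n} has odd cardinality, then K_{m,n} admits no
satisfactory partition. -/
theorem completeBipartite_odd_no_satisfactory_partition (m n : ℕ)
    (hm : 1 ≤ m) (hn : 1 ≤ n) (hodd : Odd m ∨ Odd n) :
    ¬ ∃ V1 : Finset (Fin m ⊕ Fin n),
        IsSatPartition (completeBipartiteGraph (Fin m) (Fin n)) V1 := by
  rintro ⟨V1, hV1, hV2, h1, h2⟩
  set R1 := (V1.filter (fun u => u.isRight = true)).card with hR1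
  set R2 := (V1ᶜ.filter (fun u => u.isRight = true)).card with hR2
  set L1 := (V1.filter (fun u => u.isLeft = true)).card with hL1
  set L2 := (V1ᶜ.filter (fun u => u.isLeft = true)).card with hL2
  have hRsum : R1 + R2 = n := by
    rw [hR1, hR2, filter_compl_add, filter_right_univ]
  have hLsum : L1 + L2 = m := by
    rw [hL1, hL2, filter_compl_add, filter_left_univ]
  -- there is a right vertex in V1
  have hr1 : ∃ y : Fin n, Sum.inr y ∈ V1 := by
    by_contra h
    push_neg at h
    have hR1z : R1 = 0 := by
      rw [hR1, Finset.card_eq_zero, Finset.filter_eq_empty_iff]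
      rintro (x | y) hu <;> simp_all
    obtain ⟨v, hv⟩ := hV1
    obtain (x | y) := v
    · have := h1 _ hv
      rw [dIn_inl, dIn_inl, ← hR1, ← hR2, hR1z] at this
      omega
    · exact h y hv
  have hr2 : ∃ y : Fin n, Sum.inr y ∈ V1ᶜ := by
    by_contra h
    push_neg at h
    have hR2z : R2 = 0 := by
      rw [hR2, Finset.card_eq_zero, Finset.filter_eq_empty_iff]
      rintro (x | y) hu <;> simp_all
    obtain ⟨v, hv⟩ := hV2
    obtain (x | y) := v
    · have := h2 _ hv
      rw [dIn_inl, dIn_inl, ← hR1, ← hR2, hR2z] at this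
      omega
    · exact h y hv
  have hl1 : ∃ x : Fin m, Sum.inl x ∈ V1 := by
    by_contra h
    push_neg at h
    have hL1z : L1 = 0 := by
      rw [hL1, Finset.card_eq_zero, Finset.filter_eq_empty_iff]
      rintro (x | y) hu <;> simp_all
    obtain ⟨v, hv⟩ := hV1
    obtain (x | y) := v
    · exact h x hv
    · have := h1 _ hv
      rw [dIn_inr, dIn_inr, ← hL1, ← hL2, hL1z] at this
      omega
  have hl2 : ∃ x : Fin m, Sum.inl x ∈ V1ᶜ := by
    by_contra h
    push_neg at h
    have hL2z : L2 = 0 := by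
      rw [hL2, Finset.card_eq_zero, Finset.filter_eq_empty_iff]
      rintro (x | y) hu <;> simp_all
    obtain ⟨v, hv⟩ := hV2
    obtain (x | y) := v
    · exact h x hv
    · have := h2 _ hv
      rw [dIn_inr, dIn_inr, ← hL1, ← hL2, hL2z] at this
      omega
  obtain ⟨y1, hy1⟩ := hr1
  obtain ⟨y2, hy2⟩ := hr2
  obtain ⟨x1, hx1⟩ := hl1
  obtain ⟨x2, hx2⟩ := hl2
  have e1 := h1 _ hy1
  have e2 := h2 _ hy2
  have e3 := h1 _ hx1
  have e4 := h2 _ hx2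
  rw [dIn_inr, dIn_inr, ← hL1, ← hL2] at e1 e2
  rw [dIn_inl, dIn_inl, ← hR1, ← hR2] at e3 e4
  rcases hodd with ho | ho <;> obtain ⟨k, hk⟩ := ho <;> omega
end

section
/- Let u and v be two adjacent vertices of a graph G with N(u)∖{v} = N(v)∖{u} (i.e., u and v have the same type and form a clique pair). Then in any satisfactory partition (V₁,V₂) of G, the vertices u and v lie in the same part. -/
open Classical Finset

lemma dIn_aux {V : Type*} [Fintype V] [DecidableEq V]
    (G : SimpleGraph V) (u v : V) (hadj : G.Adj u v)
    (key : ∀ w, w ≠ u → w ≠ v → (G.Adj u w ↔ G.Adj v w))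
    (S : Finset V) (hu : u ∈ S) (hv : v ∉ S) :
    dIn G S v = dIn G S u + 1 := by
  unfold dIn
  have hB : (Finset.univ.filter (fun w => G.Adj v w ∧ w ∈ S)) =
      insert u (Finset.univ.filter (fun w => G.Adj u w ∧ w ∈ S)) := by
    ext w
    simp only [Finset.mem_insert, Finset.mem_filter, Finset.mem_univ, true_and]
    constructor
    · rintro ⟨ha, hs⟩
      by_cases hw : w = u
      · exact Or.inl hw
      · right
        have hwv : w ≠ v := fun h => G.irrefl (h ▸ ha)
        exact ⟨(key w hw hwv).mpr ha, hs⟩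
    · rintro (rfl | ⟨ha, hs⟩)
      · exact ⟨hadj.symm, hu⟩
      · have hwv : w ≠ v := fun h => hv (h ▸ hs)
        have hwu : w ≠ u := fun h => G.irrefl (h ▸ ha)
        exact ⟨(key w hwu hwv).mp ha, hs⟩
  have hc := congrArg Finset.card hB
  rw [Finset.card_insert_of_notMem (by simp [G.irrefl])] at hc
  convert hc using 3
  exact Finset.filter_congr_decidable _ _ _

/-- Two adjacent same-type vertices lie in the same part of any satisfactory partition. -/
theorem adjacent_same_type_same_part {V : Type*} [Fintype V] [DecidableEq V]
    (G : SimpleGraph V) (u v : V) (hadj : G.Adj u v)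
    (htype : G.neighborSet u \ {v} = G.neighborSet v \ {u})
    (V1 : Finset V) (hsat : IsSatPartition G V1) :
    (u ∈ V1 ↔ v ∈ V1) := by
  have key : ∀ w, w ≠ u → w ≠ v → (G.Adj u w ↔ G.Adj v w) := by
    intro w hwu hwv
    have h1 := Set.ext_iff.mp htype w
    simp only [Set.mem_diff, SimpleGraph.mem_neighborSet, Set.mem_singleton_iff, hwu, hwv,
      not_false_iff, and_true] at h1
    exact h1
  have key' : ∀ w, w ≠ v → w ≠ u → (G.Adj v w ↔ G.Adj u w) := fun w h1 h2 => (key w h2 h1).symm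
  obtain ⟨-, -, h1, h2⟩ := hsat
  constructor
  · intro hu
    by_contra hv
    have e1 := dIn_aux G u v hadj key V1 hu hv
    have e2 := dIn_aux G v u hadj.symm key' V1ᶜ (Finset.mem_compl.mpr hv)
      (by simp [hu])
    have s1 := h1 u hu
    have s2 := h2 v (Finset.mem_compl.mpr hv)
    omega
  · intro hv
    by_contra hu
    have e1 := dIn_aux G v u hadj.symm key' V1 hv hu
    have e2 := dIn_aux G u v hadj key V1ᶜ (Finset.mem_compl.mpr hu)
      (by simp [hv])
    have s1 := h1 v hv
    have s2 := h2 u (Finset.mem_compl.mpr hu)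
    omega
end

section
/- Let C be a set of pairwise adjacent vertices in a graph G such that all vertices of C have the same type (N(u)∖{v} = N(v)∖{u} for all u,v ∈ C). Then in any satisfactory partition (V₁,V₂) of G, C is entirely contained in V₁ or entirely contained in V₂. -/
open Classical Finset

lemma dIn_succ_aux {V : Type*} [Fintype V] [DecidableEq V]
    (G : SimpleGraph V) (S : Finset V) (u v : V)
    (huv : G.Adj u v)
    (ht : G.neighborSet u \ {v} = G.neighborSet v \ {u})
    (hv : v ∈ S) (hu : u ∉ S) :
    dIn G S u = dIn G S v + 1 := by
  classical
  have key : ∀ x, x ≠ u → x ≠ v → (G.Adj u x ↔ G.Adj v x) := by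
    intro x hxu hxv
    have h := Set.ext_iff.mp ht x
    simpa [SimpleGraph.mem_neighborSet, hxu, hxv] using h
  unfold dIn
  have hset : Finset.univ.filter (fun x => G.Adj u x ∧ x ∈ S)
      = insert v (Finset.univ.filter (fun x => G.Adj v x ∧ x ∈ S)) := by
    ext x
    simp only [Finset.mem_insert, Finset.mem_filter, Finset.mem_univ, true_and]
    constructor
    · rintro ⟨hadj, hxS⟩
      by_cases hxv : x = v
      · exact Or.inl hxv
      · have hxu : x ≠ u := fun h => hu (h ▸ hxS)
        exact Or.inr ⟨(key x hxu hxv).mp hadj, hxS⟩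
    · rintro (rfl | ⟨hadj, hxS⟩)
      · exact ⟨huv, hv⟩
      · have hxu : x ≠ u := fun h => hu (h ▸ hxS)
        have hxv : x ≠ v := fun h => G.irrefl (h ▸ hadj)
        exact ⟨(key x hxu hxv).mpr hadj, hxS⟩
  have hvnot : v ∉ Finset.univ.filter (fun x => G.Adj v x ∧ x ∈ S) := by
    simp [G.irrefl]
  have hcard := congrArg Finset.card hset
  rw [Finset.card_insert_of_notMem hvnot] at hcard
  convert hcard using 2 <;> congr!

/-- A clique type class lies entirely in one part of any satisfactory partition. -/
theorem clique_type_class_not_split {V : Type*} [Fintype V] [DecidableEq V]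
    (G : SimpleGraph V) (C : Finset V)
    (hclique : ∀ u ∈ C, ∀ v ∈ C, u ≠ v → G.Adj u v)
    (htype : ∀ u ∈ C, ∀ v ∈ C, G.neighborSet u \ {v} = G.neighborSet v \ {u})
    (V1 : Finset V) (hsat : IsSatPartition G V1) :
    C ⊆ V1 ∨ C ⊆ V1ᶜ := by
  by_contra h
  push_neg at h
  obtain ⟨⟨u, huC, hu1⟩, ⟨v, hvC, hv2⟩⟩ :
      (∃ u ∈ C, u ∉ V1) ∧ (∃ v ∈ C, v ∉ V1ᶜ) := by
    constructor
    · rcases Finset.not_subset.mp h.1 with ⟨u, huC, hu⟩; exact ⟨u, huC, hu⟩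
    · rcases Finset.not_subset.mp h.2 with ⟨v, hvC, hv⟩; exact ⟨v, hvC, hv⟩
  have hu2 : u ∈ V1ᶜ := Finset.mem_compl.mpr hu1
  have hv1 : v ∈ V1 := by simpa using hv2
  have hne : u ≠ v := fun e => hu1 (e ▸ hv1)
  have hadj : G.Adj u v := hclique u huC v hvC hne
  have h1 : dIn G V1 u = dIn G V1 v + 1 :=
    dIn_succ_aux G V1 u v hadj (htype u huC v hvC) hv1 hu1
  have h2 : dIn G V1ᶜ v = dIn G V1ᶜ u + 1 :=
    dIn_succ_aux G V1ᶜ v u hadj.symm (htype v hvC u huC) hu2 hv2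
  obtain ⟨-, -, hs1, hs2⟩ := hsat
  have := hs1 v hv1
  have := hs2 u hu2
  omega
end

section
/- Let G be a graph with type classes as above, and let v belong to an independent type class C_j with v ∈ V₁. Then v is satisfied if and only if Σ_{i: C_i ∈ N_H(C_j) ∩ I₁} n_i + Σ_{i: C_i ∈ N_H(C_j) ∩ I₃} 2x_i ≥ Σ_{i: C_i ∈ N_H(C_j) ∩ I₂} n_i + Σ_{i: C_i ∈ N_H(C_j) ∩ I₃} n_i, where x_i = |V₁ ∩ C_i| and n_i = |C_i|. -/
open Classical Finset

/-- Classes `i` and `i'` are completely joined in `G`. -/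
def ClassesJoined {V : Type*} {k : ℕ} (G : SimpleGraph V) (C : Fin k → Finset V) (i i' : Fin k) : Prop :=
  ∀ u ∈ C i, ∀ w ∈ C i', G.Adj u w

/-- The closed neighbourhood of class `j` in the type graph `H`. -/
noncomputable def NHclosed {V : Type*} {k : ℕ} (G : SimpleGraph V) (C : Fin k → Finset V)
    (j : Fin k) : Finset (Fin k) :=
  Finset.univ.filter (fun i => i = j ∨ ClassesJoined G C i j)

/-- The open neighbourhood of class `j` in the type graph `H`. -/
noncomputable def NHopen {V : Type*} {k : ℕ} (G : SimpleGraph V) (C : Fin k → Finset V)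
    (j : Fin k) : Finset (Fin k) :=
  Finset.univ.filter (fun i => i ≠ j ∧ ClassesJoined G C i j)

/-- Classes entirely contained in `V1`. -/
noncomputable def I1 {V : Type*} [Fintype V] {k : ℕ} (C : Fin k → Finset V) (V1 : Finset V) :
    Finset (Fin k) :=
  Finset.univ.filter (fun i => C i ⊆ V1)

/-- Classes entirely contained in `V1ᶜ` (i.e. in `V2`). -/
noncomputable def I2 {V : Type*} [Fintype V] [DecidableEq V] {k : ℕ} (C : Fin k → Finset V)
    (V1 : Finset V) : Finset (Fin k) :=
  Finset.univ.filter (fun i => C i ⊆ V1ᶜ)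

/-- Classes meeting both parts. -/
noncomputable def I3 {V : Type*} [Fintype V] [DecidableEq V] {k : ℕ} (C : Fin k → Finset V)
    (V1 : Finset V) : Finset (Fin k) :=
  Finset.univ.filter (fun i => (C i ∩ V1).Nonempty ∧ (C i ∩ V1ᶜ).Nonempty)

/-- Characterization of satisfaction for a vertex of an independent type class lying in V₁. -/
theorem independent_class_satisfied_iff {V : Type*} [Fintype V] [DecidableEq V]
    (G : SimpleGraph V) (k : ℕ) (C : Fin k → Finset V)
    (hpart : ∀ v : V, ∃! i, v ∈ C i)
    (htype : ∀ i, ∀ u ∈ C i, ∀ w ∈ C i, G.neighborSet u \ {w} = G.neighborSet w \ {u})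
    (V1 : Finset V) (j : Fin k)
    (hindep : ∀ u ∈ C j, ∀ w ∈ C j, ¬ G.Adj u w)
    (v : V) (hv : v ∈ C j) (hv1 : v ∈ V1) :
    dIn G V1ᶜ v ≤ dIn G V1 v ↔
      (∑ i ∈ NHopen G C j ∩ I2 C V1, (C i).card)
        + (∑ i ∈ NHopen G C j ∩ I3 C V1, (C i).card)
      ≤ (∑ i ∈ NHopen G C j ∩ I1 C V1, (C i).card)
        + (∑ i ∈ NHopen G C j ∩ I3 C V1, 2 * (C i ∩ V1).card) := by

  classical
  set N := NHopen G C j with hNdef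
  -- classes are pairwise disjoint
  have hdisj : ∀ i i' : Fin k, i ≠ i' → Disjoint (C i) (C i') := by
    intro i i' hne
    refine Finset.disjoint_left.mpr ?_
    intro a ha ha'
    obtain ⟨i0, -, huniq⟩ := hpart a
    exact hne ((huniq i ha).trans (huniq i' ha').symm)
  -- adjacency from v is determined by type classes
  have hadj : ∀ u : V, G.Adj v u ↔ ∃ i ∈ N, u ∈ C i := by
    intro u
    constructor
    · intro h
      obtain ⟨i, hui, -⟩ := hpart u
      have hne : i ≠ j := by
        intro heq; subst heq
        exact hindep v hv u hui h
      have vne : ∀ a ∈ C i, v ≠ a := by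
        intro a ha heq
        exact (Finset.disjoint_left.mp (hdisj i j hne)) (heq ▸ ha) hv
      have step1 : ∀ a ∈ C i, G.Adj v a := by
        intro a ha
        have hset := htype i u hui a ha
        have hvmem : v ∈ G.neighborSet u \ {a} := by
          refine ⟨h.symm, ?_⟩
          simp only [Set.mem_singleton_iff]
          exact vne a ha
        rw [hset] at hvmem
        exact hvmem.1.symm
      have joined : ClassesJoined G C i j := by
        intro a ha b hb
        have hva := step1 a ha
        have hset := htype j v hv b hb
        have habne : a ≠ b := by
          intro heq
          exact (Finset.disjoint_left.mp (hdisj i j hne)) ha (heq ▸ hb)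
        have hamem : a ∈ G.neighborSet v \ {b} := by
          refine ⟨hva, ?_⟩
          simp only [Set.mem_singleton_iff]
          exact habne
        rw [hset] at hamem
        exact (hamem.1 : G.Adj b a).symm
      refine ⟨i, ?_, hui⟩
      simp only [hNdef, NHopen, Finset.mem_filter, Finset.mem_univ, true_and]
      exact ⟨hne, joined⟩
    · rintro ⟨i, hiN, hui⟩
      simp only [hNdef, NHopen, Finset.mem_filter, Finset.mem_univ, true_and] at hiN
      exact (hiN.2 u hui v hv).symm
  -- counting neighbours in a set S
  have hdIn : ∀ S : Finset V, dIn G S v = ∑ i ∈ N, (C i ∩ S).card := by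
    intro S
    rw [dIn]
    have hpd : ∀ i ∈ N, ∀ i' ∈ N, i ≠ i' → Disjoint (C i ∩ S) (C i' ∩ S) := by
      intro i _ i' _ hne
      exact (hdisj i i' hne).mono Finset.inter_subset_left Finset.inter_subset_left
    rw [← Finset.card_biUnion hpd]
    congr 1
    ext u
    simp only [Finset.mem_filter, Finset.mem_univ, true_and, Finset.mem_biUnion,
      Finset.mem_inter, hadj u]
    tauto
  have hsum : ∀ i : Fin k, (C i ∩ V1).card + (C i ∩ V1ᶜ).card = (C i).card := by
    intro i
    have : C i ∩ V1ᶜ = C i \ V1 := by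
      ext a; simp [Finset.mem_sdiff]
    rw [this]
    exact Finset.card_inter_add_card_sdiff (C i) V1
  -- the three pieces
  set s1 := N ∩ I1 C V1 with hs1
  set s2 := N ∩ I2 C V1 with hs2
  set s3 := N ∩ I3 C V1 with hs3
  have hcover : N = (s1 ∪ s2) ∪ s3 := by
    ext i
    simp only [hs1, hs2, hs3, Finset.mem_union, Finset.mem_inter, I1, I2, I3,
      Finset.mem_filter, Finset.mem_univ, true_and]
    constructor
    · intro hi
      by_cases h1 : C i ⊆ V1
      · exact Or.inl (Or.inl ⟨hi, h1⟩)
      · by_cases h2 : C i ⊆ V1ᶜ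
        · exact Or.inl (Or.inr ⟨hi, h2⟩)
        · refine Or.inr ⟨hi, ?_, ?_⟩
          · obtain ⟨a, ha, ha'⟩ := Finset.not_subset.mp h2
            exact ⟨a, Finset.mem_inter.mpr ⟨ha, by simpa using ha'⟩⟩
          · obtain ⟨a, ha, ha'⟩ := Finset.not_subset.mp h1
            exact ⟨a, Finset.mem_inter.mpr ⟨ha, by simpa using ha'⟩⟩
    · rintro ((⟨hi, -⟩ | ⟨hi, -⟩) | ⟨hi, -⟩) <;> exact hi
  have hdisj3 : Disjoint (s1 ∪ s2) s3 := by
    rw [Finset.disjoint_left]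
    intro i hi hi3
    simp only [hs1, hs2, hs3, Finset.mem_union, Finset.mem_inter, I1, I2, I3,
      Finset.mem_filter, Finset.mem_univ, true_and] at hi hi3
    obtain ⟨-, ⟨a, ha⟩, ⟨b, hb⟩⟩ := hi3
    rw [Finset.mem_inter] at ha hb
    rcases hi with ⟨-, h1⟩ | ⟨-, h2⟩
    · exact absurd (h1 hb.1) (by simpa using hb.2)
    · exact absurd (h2 ha.1) (by simpa using ha.2)
  have hempty : ∀ i ∈ s1 ∩ s2, C i = ∅ := by
    intro i hi
    simp only [hs1, hs2, Finset.mem_inter, I1, I2, Finset.mem_filter, Finset.mem_univ,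
      true_and] at hi
    obtain ⟨⟨-, h1⟩, -, h2⟩ := hi
    refine Finset.eq_empty_of_forall_notMem fun a ha => ?_
    have := h2 ha
    simp only [Finset.mem_compl] at this
    exact this (h1 ha)
  have hsplit : ∀ g : Fin k → ℕ, (∀ i, C i = ∅ → g i = 0) →
      ∑ i ∈ N, g i = ∑ i ∈ s1, g i + ∑ i ∈ s2, g i + ∑ i ∈ s3, g i := by
    intro g hg
    rw [hcover, Finset.sum_union hdisj3]
    have h12 : ∑ i ∈ s1 ∪ s2, g i + ∑ i ∈ s1 ∩ s2, g i = ∑ i ∈ s1, g i + ∑ i ∈ s2, g i :=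
      Finset.sum_union_inter
    have hz : ∑ i ∈ s1 ∩ s2, g i = 0 :=
      Finset.sum_eq_zero fun i hi => hg i (hempty i hi)
    omega
  -- evaluate dIn V1
  have e1 : dIn G V1 v = ∑ i ∈ s1, (C i).card + ∑ i ∈ s3, (C i ∩ V1).card := by
    rw [hdIn V1, hsplit (fun i => (C i ∩ V1).card)
      (fun i hi => by simp [hi])]
    have t1 : ∑ i ∈ s1, (C i ∩ V1).card = ∑ i ∈ s1, (C i).card := by
      refine Finset.sum_congr rfl fun i hi => ?_
      simp only [hs1, Finset.mem_inter, I1, Finset.mem_filter, Finset.mem_univ, true_and] at hi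
      rw [Finset.inter_eq_left.mpr hi.2]
    have t2 : ∑ i ∈ s2, (C i ∩ V1).card = 0 := by
      refine Finset.sum_eq_zero fun i hi => ?_
      simp only [hs2, Finset.mem_inter, I2, Finset.mem_filter, Finset.mem_univ, true_and] at hi
      rw [Finset.card_eq_zero]
      refine Finset.eq_empty_of_forall_notMem fun a ha => ?_
      rw [Finset.mem_inter] at ha
      have := hi.2 ha.1
      simp only [Finset.mem_compl] at this
      exact this ha.2
    omega
  have e2 : dIn G V1 v + dIn G V1ᶜ v
      = ∑ i ∈ s1, (C i).card + ∑ i ∈ s2, (C i).card + ∑ i ∈ s3, (C i).card := by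
    rw [hdIn V1, hdIn V1ᶜ, ← Finset.sum_add_distrib,
      Finset.sum_congr rfl (fun i _ => hsum i),
      hsplit (fun i => (C i).card) (fun i hi => by simp [hi])]
  have e3 : ∑ i ∈ s3, 2 * (C i ∩ V1).card = 2 * ∑ i ∈ s3, (C i ∩ V1).card := by
    rw [Finset.mul_sum]
  rw [e3]
  omega
end

section
/- In the gadget replacing a complementary vertex pair (a,b): add new vertices △ and □ with edges (a,△), (a,□), (b,△), (b,□). If (V₁′,V₂′) is a satisfactory partition of the augmented graph with △ ∈ V₁′ and □ ∈ V₂′, then exactly one of a, b belongs to V₁′. -/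
open Classical Finset

/-- In the complementary-pair gadget (△ adjacent exactly to a,b and □ adjacent exactly
to a,b), any satisfactory partition with △ ∈ V₁ and □ ∈ V₂ contains exactly one of a, b
in V₁. -/
theorem gadget_exactly_one {W : Type*} [Fintype W] [DecidableEq W]
    (G' : SimpleGraph W) (a b t s : W)
    (ht : G'.neighborSet t = {a, b}) (hs : G'.neighborSet s = {a, b})
    (V1 : Finset W) (hsat : IsSatPartition G' V1)
    (htV1 : t ∈ V1) (hsV2 : s ∈ V1ᶜ) :
    Xor' (a ∈ V1) (b ∈ V1) := by

  obtain ⟨-, -, h1, h2⟩ := hsat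
  have hadjt : ∀ u, G'.Adj t u ↔ u = a ∨ u = b := fun u => by
    rw [← SimpleGraph.mem_neighborSet, ht]; simp
  have hadjs : ∀ u, G'.Adj s u ↔ u = a ∨ u = b := fun u => by
    rw [← SimpleGraph.mem_neighborSet, hs]; simp
  by_cases haV : a ∈ V1 <;> by_cases hbV : b ∈ V1
  · exfalso
    have hle := h2 s hsV2
    have e1 : dIn G' V1ᶜ s = 0 := by
      unfold dIn
      rw [Finset.card_eq_zero, Finset.eq_empty_iff_forall_notMem]
      intro u hu
      simp only [Finset.mem_filter, hadjs, Finset.mem_compl] at hu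
      rcases hu.2.1 with rfl | rfl
      · exact hu.2.2 haV
      · exact hu.2.2 hbV
    have e2 : 0 < dIn G' V1 s := by
      unfold dIn
      rw [Finset.card_pos]
      exact ⟨a, by simp [hadjs, haV]⟩
    omega
  · exact Or.inl ⟨haV, hbV⟩
  · exact Or.inr ⟨hbV, haV⟩
  · exfalso
    have hle := h1 t htV1
    have e1 : dIn G' V1 t = 0 := by
      unfold dIn
      rw [Finset.card_eq_zero, Finset.eq_empty_iff_forall_notMem]
      intro u hu
      simp only [Finset.mem_filter, hadjt] at hu
      rcases hu.2.1 with rfl | rfl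
      · exact haV hu.2.2
      · exact hbV hu.2.2
    have e2 : 0 < dIn G' V1ᶜ t := by
      unfold dIn
      rw [Finset.card_pos]
      exact ⟨a, by simp [hadjt, haV]⟩
    omega
end
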